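/- arXiv:1008.3761 — 4 statements merged into one kernel-verified Lean document; each statement's English description precedes it below -/
import Mathlib

section
/- For every λ > 0, the Laplace transform identity ∫_0^∞ e^{−λs} · (a/√(2π s³)) · e^{−a²/(2s)} ds = e^{−√(2λ) a} holds for every a > 0. -/
open MeasureTheory Set

private lemma glaisher_half (c : ℝ) (hc : 0 < c) :
    ∫ u in Ioi (0:ℝ), Real.exp (-(u - c/u)^2/2) = Real.sqrt (2*Real.pi) / 2 := by
  set g : ℝ → ℝ := fun u => Real.exp (-(u - c/u)^2/2) with hgdef
  -- measurability of g
  have hgmeas : Measurable g := by fun_prop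
  -- integrability of g on Ioi 0
  have hint_g : IntegrableOn g (Ioi 0) := by
    have hb : Integrable (fun u : ℝ => Real.exp c * Real.exp (-(1/2 : ℝ) * u^2)) := by
      exact (integrable_exp_neg_mul_sq (by norm_num)).const_mul _
    refine (hb.integrableOn).mono' (hgmeas.aestronglyMeasurable.restrict) ?_
    filter_upwards [ae_restrict_mem measurableSet_Ioi] with u hu
    have hu0 : 0 < u := hu
    have key : -(u - c/u)^2/2 ≤ c + -(1/2 : ℝ) * u^2 := by
      have h1 : (u - c/u)^2 = u^2 - 2*c + (c/u)^2 := by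
        field_simp; ring
      nlinarith [sq_nonneg (c/u)]
    have : g u ≤ Real.exp c * Real.exp (-(1/2 : ℝ) * u^2) := by
      rw [← Real.exp_add]
      exact Real.exp_le_exp.mpr key
    simpa [hgdef, abs_of_pos (Real.exp_pos _)] using this
  -- substitution u ↦ c/u on Ioi 0
  have hderiv1 : ∀ u ∈ Ioi (0:ℝ), HasDerivWithinAt (fun u => c/u) (-(c/u^2)) (Ioi 0) u := by
    intro u hu
    have hu0 : (u : ℝ) ≠ 0 := ne_of_gt hu
    have : HasDerivAt (fun u : ℝ => c/u) (-(c/u^2)) u := by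
      have h := (hasDerivAt_inv hu0).const_mul c
      simpa [div_eq_mul_inv, mul_comm, neg_div, mul_neg] using h
    exact this.hasDerivWithinAt
  have hinj1 : InjOn (fun u => c/u) (Ioi (0:ℝ)) := by
    intro x hx y hy h
    have hx0 : (x:ℝ) ≠ 0 := ne_of_gt hx
    have hy0 : (y:ℝ) ≠ 0 := ne_of_gt hy
    field_simp at h
    exact h.symm
  have himg1 : (fun u => c/u) '' Ioi (0:ℝ) = Ioi (0:ℝ) := by
    ext y
    simp only [mem_image, mem_Ioi]
    constructor
    · rintro ⟨u, hu, rfl⟩; exact div_pos hc hu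
    · intro hy; exact ⟨c/y, div_pos hc hy, by field_simp⟩
  have hgcomp : ∀ u ∈ Ioi (0:ℝ), g (c/u) = g u := by
    intro u hu
    have hu0 : (u:ℝ) ≠ 0 := ne_of_gt hu
    have h1 : c/(c/u) = u := by field_simp
    have h2 : (c/u - u)^2 = (u - c/u)^2 := by ring
    simp only [hgdef, h1, h2]
  have sub1 : ∫ u in Ioi (0:ℝ), g u = ∫ u in Ioi (0:ℝ), (c/u^2) * g u := by
    conv_lhs => rw [← himg1]
    rw [integral_image_eq_integral_abs_deriv_smul measurableSet_Ioi hderiv1 hinj1 g]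
    refine setIntegral_congr_fun measurableSet_Ioi ?_
    intro u hu
    have hu0 : 0 < u := hu
    have : |(-(c/u^2))| = c/u^2 := by
      rw [abs_neg, abs_of_pos (div_pos hc (pow_pos hu0 2))]
    simp [this, hgcomp u hu, smul_eq_mul]
  have hint_g2 : IntegrableOn (fun u => (c/u^2) * g u) (Ioi (0:ℝ)) := by
    have h := (integrableOn_image_iff_integrableOn_abs_deriv_smul measurableSet_Ioi
      hderiv1 hinj1 g).mp (by rwa [himg1])
    refine h.congr_fun ?_ measurableSet_Ioi
    intro u hu
    have hu0 : 0 < u := hu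
    have : |(-(c/u^2))| = c/u^2 := by
      rw [abs_neg, abs_of_pos (div_pos hc (pow_pos hu0 2))]
    simp [this, hgcomp u hu, smul_eq_mul]
  -- substitution t = u - c/u, Ioi 0 → univ
  have hderiv2 : ∀ u ∈ Ioi (0:ℝ), HasDerivWithinAt (fun u => u - c/u) (1 + c/u^2) (Ioi 0) u := by
    intro u hu
    have hu0 : (u : ℝ) ≠ 0 := ne_of_gt hu
    have h1 : HasDerivAt (fun u : ℝ => c/u) (-(c/u^2)) u := by
      have h := (hasDerivAt_inv hu0).const_mul c
      simpa [div_eq_mul_inv, mul_comm, neg_div, mul_neg] using h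
    have : HasDerivAt (fun u : ℝ => u - c/u) (1 - -(c/u^2)) u := (hasDerivAt_id u).sub h1
    simpa [sub_neg_eq_add] using this.hasDerivWithinAt
  have hinj2 : InjOn (fun u => u - c/u) (Ioi (0:ℝ)) := by
    have : StrictMonoOn (fun u : ℝ => u - c/u) (Ioi 0) := by
      intro x hx y hy hxy
      have hx0 : (0:ℝ) < x := hx
      have hy0 : (0:ℝ) < y := hy
      have : c/y < c/x := div_lt_div_of_pos_left hc hx0 hxy
      simp only
      linarith
    exact this.injOn
  have himg2 : (fun u => u - c/u) '' Ioi (0:ℝ) = univ := by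
    ext t
    simp only [mem_image, mem_Ioi, mem_univ, iff_true]
    set r := Real.sqrt (t^2 + 4*c) with hr
    have hr2 : r^2 = t^2 + 4*c := Real.sq_sqrt (by nlinarith)
    have hrt : |t| < r := by
      have : Real.sqrt (t^2) < r := by
        apply Real.sqrt_lt_sqrt (sq_nonneg t); linarith
      simpa [Real.sqrt_sq_eq_abs] using this
    have hupos : 0 < (t + r)/2 := by
      have := neg_abs_le t
      have := abs_nonneg t
      linarith [hrt]
    refine ⟨(t + r)/2, hupos, ?_⟩
    have htr : t + r ≠ 0 := by intro h; rw [h] at hupos; simp at hupos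
    have hne : (t + r)/2 ≠ 0 := ne_of_gt hupos
    field_simp
    nlinarith [hr2]
  have sub2 : ∫ t : ℝ, Real.exp (-t^2/2) = ∫ u in Ioi (0:ℝ), (1 + c/u^2) * g u := by
    rw [← setIntegral_univ, ← himg2,
      integral_image_eq_integral_abs_deriv_smul measurableSet_Ioi hderiv2 hinj2
        (fun t => Real.exp (-t^2/2))]
    refine setIntegral_congr_fun measurableSet_Ioi ?_
    intro u hu
    have hu0 : 0 < u := hu
    have hpos : 0 < 1 + c/u^2 := by positivity
    simp [abs_of_pos hpos, smul_eq_mul, hgdef]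
  have gauss : ∫ t : ℝ, Real.exp (-t^2/2) = Real.sqrt (2*Real.pi) := by
    have h : ∀ t : ℝ, -t^2/2 = -(1/2 : ℝ) * t^2 := fun t => by ring
    simp_rw [h]
    rw [integral_gaussian, show Real.pi / (1/2:ℝ) = 2*Real.pi by ring]
  have hsplit : ∫ u in Ioi (0:ℝ), (1 + c/u^2) * g u
      = (∫ u in Ioi (0:ℝ), g u) + ∫ u in Ioi (0:ℝ), (c/u^2) * g u := by
    rw [← integral_add hint_g hint_g2]
    congr 1
    ext u
    ring
  have : Real.sqrt (2*Real.pi) = 2 * ∫ u in Ioi (0:ℝ), g u := by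
    rw [← gauss, sub2, hsplit, ← sub1]; ring
  linarith [this]

/-- Laplace transform of the first passage time density:
`∫_0^∞ e^{-λs} (a/√(2πs³)) e^{-a²/(2s)} ds = e^{-√(2λ) a}`. -/
theorem laplace_first_passage (lam a : ℝ) (hlam : 0 < lam) (ha : 0 < a) :
    ∫ s in Ioi (0:ℝ),
        Real.exp (-lam * s) * (a / Real.sqrt (2 * Real.pi * s ^ 3)) *
          Real.exp (-a ^ 2 / (2 * s))
      = Real.exp (-(Real.sqrt (2 * lam)) * a) := by
  set c : ℝ := Real.sqrt (2 * lam) * a with hcdef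
  have hc : 0 < c := mul_pos (Real.sqrt_pos.mpr (by linarith)) ha
  have hc2 : c^2 = 2 * lam * a^2 := by
    rw [hcdef, mul_pow, Real.sq_sqrt (by linarith)]
  -- substitution s = a²/u²
  have hderiv : ∀ u ∈ Ioi (0:ℝ),
      HasDerivWithinAt (fun u => a^2/u^2) (-(2*a^2/u^3)) (Ioi 0) u := by
    intro u hu
    have hu0 : (u:ℝ) ≠ 0 := ne_of_gt hu
    have h := (hasDerivAt_const u (a^2)).div (hasDerivAt_pow 2 u) (pow_ne_zero 2 hu0)
    have h' : HasDerivAt (fun u : ℝ => a^2/u^2) (-(2*a^2/u^3)) u := by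
      refine h.congr_deriv ?_
      push_cast
      field_simp
      ring
    exact h'.hasDerivWithinAt
  have hinj : InjOn (fun u => a^2/u^2) (Ioi (0:ℝ)) := by
    have : StrictAntiOn (fun u : ℝ => a^2/u^2) (Ioi 0) := by
      intro x hx y hy hxy
      have hx0 : (0:ℝ) < x := hx
      exact div_lt_div_of_pos_left (by positivity) (by positivity)
        (by nlinarith)
    exact this.injOn
  have himg : (fun u => a^2/u^2) '' Ioi (0:ℝ) = Ioi (0:ℝ) := by
    ext y
    simp only [mem_image, mem_Ioi]
    constructor
    · rintro ⟨u, hu, rfl⟩; positivity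
    · intro hy
      have hsy : (0:ℝ) < Real.sqrt y := Real.sqrt_pos.mpr hy
      have ha2 : a^2 ≠ 0 := by positivity
      have hy0 : y ≠ 0 := ne_of_gt hy
      refine ⟨a/Real.sqrt y, by positivity, ?_⟩
      rw [div_pow, Real.sq_sqrt (le_of_lt hy)]
      field_simp
  have key : ∫ s in Ioi (0:ℝ),
        Real.exp (-lam * s) * (a / Real.sqrt (2 * Real.pi * s ^ 3)) *
          Real.exp (-a ^ 2 / (2 * s))
      = ∫ u in Ioi (0:ℝ),
          (2 / Real.sqrt (2*Real.pi)) * Real.exp (-c) * Real.exp (-(u - c/u)^2/2) := by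
    conv_lhs => rw [← himg]
    rw [integral_image_eq_integral_abs_deriv_smul measurableSet_Ioi hderiv hinj]
    refine setIntegral_congr_fun measurableSet_Ioi ?_
    intro u hu
    have hu0 : 0 < u := hu
    have habs : |(-(2*a^2/u^3))| = 2*a^2/u^3 := by
      rw [abs_neg, abs_of_pos (by positivity)]
    have hsqrt : Real.sqrt (2 * Real.pi * (a^2/u^2)^3)
        = Real.sqrt (2*Real.pi) * a^3 / u^3 := by
      rw [show 2 * Real.pi * (a^2/u^2)^3 = (Real.sqrt (2*Real.pi) * a^3 / u^3)^2 by
        simp only [div_pow, mul_pow, Real.sq_sqrt (show (0:ℝ) ≤ 2*Real.pi by positivity)]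
        field_simp]
      exact Real.sqrt_sq (by positivity)
    have hexp : -lam * (a^2/u^2) + -a^2 / (2 * (a^2/u^2)) = -c + -(u - c/u)^2/2 := by
      have h1 : -a^2 / (2 * (a^2/u^2)) = -u^2/2 := by
        field_simp
      rw [h1]
      have h2 : (u - c/u)^2 = u^2 - 2*c + c^2/u^2 := by
        field_simp; ring
      rw [h2]
      field_simp
      nlinarith [hc2]
    simp only [smul_eq_mul]
    rw [habs, hsqrt]
    have hE : Real.exp (-lam * (a^2/u^2)) * Real.exp (-a^2/(2*(a^2/u^2)))
        = Real.exp (-c) * Real.exp (-(u - c/u)^2/2) := by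
      rw [← Real.exp_add, ← Real.exp_add, hexp]
    have h2pi : (0:ℝ) < Real.sqrt (2*Real.pi) := Real.sqrt_pos.mpr (by positivity)
    have hco : 2*a^2/u^3 * (a / (Real.sqrt (2*Real.pi) * a^3/u^3))
        = 2/Real.sqrt (2*Real.pi) := by
      field_simp
    calc 2*a^2/u^3 * (Real.exp (-lam * (a^2/u^2)) * (a / (Real.sqrt (2*Real.pi) * a^3/u^3))
            * Real.exp (-a^2/(2*(a^2/u^2))))
        = (2*a^2/u^3 * (a / (Real.sqrt (2*Real.pi) * a^3/u^3)))
            * (Real.exp (-lam * (a^2/u^2)) * Real.exp (-a^2/(2*(a^2/u^2)))) := by ring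
      _ = 2/Real.sqrt (2*Real.pi) * (Real.exp (-c) * Real.exp (-(u - c/u)^2/2)) := by
            rw [hco, hE]
      _ = 2/Real.sqrt (2*Real.pi) * Real.exp (-c) * Real.exp (-(u - c/u)^2/2) := by ring
  rw [key, integral_const_mul, glaisher_half c hc]
  have h2pi : (0:ℝ) < Real.sqrt (2*Real.pi) := Real.sqrt_pos.mpr (by positivity)
  rw [show -(Real.sqrt (2*lam)) * a = -c by rw [hcdef]; ring]
  set S := Real.sqrt (2*Real.pi) with hS
  have hS0 : S ≠ 0 := ne_of_gt h2pi
  field_simp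
end

section
/- Let L : [0,∞) → [0,∞) be continuous nondecreasing with L(0)=0, γ > 0, S ≥ 0, and let τ be the inverse of τ⁻¹(t) = t + γL(t). Define L^s(t) = L(τ(t)), ζ = inf{t ≥ 0 : L(t) > S} and ζ_γ = inf{t ≥ 0 : L^s(t) > S}. Then ζ_γ = ζ + γ·L(ζ) whenever ζ < ∞, and if additionally L is unbounded then L(ζ) = S, hence ζ_γ = ζ + γS. -/
open Set

/-- Deterministic content of Lemma gen_lem1: the killing time of the time-changed path
equals the killing time of the original path shifted by `γ L(ζ)`, and `L(ζ) = S` when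
`L` is unbounded. -/
theorem sticky_killing_time (L : ℝ → ℝ) (hLc : ContinuousOn L (Ici 0))
    (hLm : MonotoneOn L (Ici 0)) (hL0 : L 0 = 0)
    (γ S : ℝ) (hγ : 0 < γ) (hS : 0 ≤ S)
    (τ : ℝ → ℝ) (hτmap : MapsTo τ (Ici 0) (Ici 0))
    (hτ1 : ∀ t ∈ Ici (0:ℝ), τ (t + γ * L t) = t)
    (hτ2 : ∀ t ∈ Ici (0:ℝ), τ t + γ * L (τ t) = t)
    (ζ ζγ : ℝ)
    (hζ : ζ = sInf {t : ℝ | 0 ≤ t ∧ S < L t})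
    (hζγ : ζγ = sInf {t : ℝ | 0 ≤ t ∧ S < L (τ t)}) :
    ({t : ℝ | 0 ≤ t ∧ S < L t}.Nonempty → ζγ = ζ + γ * L ζ) ∧
    (Filter.Tendsto L Filter.atTop Filter.atTop → L ζ = S ∧ ζγ = ζ + γ * S) := by
  set A := {t : ℝ | 0 ≤ t ∧ S < L t} with hA
  set B := {t : ℝ | 0 ≤ t ∧ S < L (τ t)} with hB
  set f : ℝ → ℝ := fun t => t + γ * L (max t 0) with hf
  have hLnn : ∀ t, 0 ≤ t → 0 ≤ L t := fun t ht => by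
    have := hLm (mem_Ici.mpr le_rfl) (mem_Ici.mpr ht) ht
    rwa [hL0] at this
  have hfc : Continuous f := by
    apply Continuous.add continuous_id
    exact Continuous.mul continuous_const
      (hLc.comp_continuous (continuous_id.max continuous_const)
        (fun x => mem_Ici.mpr (le_max_right _ _)))
  have hfm : Monotone f := by
    intro a b hab
    have h1 : L (max a 0) ≤ L (max b 0) :=
      hLm (mem_Ici.mpr (le_max_right _ _)) (mem_Ici.mpr (le_max_right _ _)) (max_le_max hab le_rfl)
    exact add_le_add hab (mul_le_mul_of_nonneg_left h1 hγ.le)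
  have hfeq : ∀ t, 0 ≤ t → f t = t + γ * L t := fun t ht => by
    simp [hf, max_eq_left ht]
  have hbdd : BddBelow A := ⟨0, fun x hx => hx.1⟩
  have hBA : B = f '' A := by
    ext t
    constructor
    · rintro ⟨ht0, htS⟩
      have hτt : (0:ℝ) ≤ τ t := hτmap ht0
      refine ⟨τ t, ⟨hτt, htS⟩, ?_⟩
      rw [hfeq _ hτt]
      exact hτ2 t ht0
    · rintro ⟨s, ⟨hs0, hsS⟩, rfl⟩
      have hfs : (0:ℝ) ≤ f s := by
        rw [hfeq _ hs0]
        have := hLnn s hs0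
        nlinarith
      have hτfs : τ (f s) = s := by
        rw [hfeq _ hs0]; exact hτ1 s hs0
      exact ⟨hfs, by rw [hτfs]; exact hsS⟩
  have key : A.Nonempty → ζγ = ζ + γ * L ζ := by
    intro hne
    have hζ0 : 0 ≤ ζ := hζ ▸ Real.sInf_nonneg (fun x hx => hx.1)
    have h1 : f (sInf A) = sInf (f '' A) :=
      hfm.map_csInf_of_continuousAt hfc.continuousAt hne hbdd
    rw [hζγ, hBA, ← h1, ← hζ, hfeq _ hζ0]
  refine ⟨key, ?_⟩
  intro htop
  have hne : A.Nonempty := by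
    obtain ⟨t, ht1, ht2⟩ := ((htop.eventually_gt_atTop S).and
      (Filter.eventually_ge_atTop 0)).exists
    exact ⟨t, ht2, ht1⟩
  have hζ0 : 0 ≤ ζ := hζ ▸ Real.sInf_nonneg (fun x hx => hx.1)
  have hlb : ∀ t ∈ A, ζ ≤ t := fun t ht => hζ ▸ csInf_le hbdd ht
  have hcw : ContinuousWithinAt L (Ici 0) ζ := hLc ζ hζ0
  -- L ζ ≥ S
  have hge : S ≤ L ζ := by
    by_contra h
    push_neg at h
    have hev : ∀ᶠ t in nhdsWithin ζ (Ici 0), L t < S := hcw (Iio_mem_nhds h)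
    obtain ⟨δ, hδ, hball⟩ := Metric.mem_nhdsWithin_iff.mp hev
    obtain ⟨t, htA, htlt⟩ := Real.lt_sInf_add_pos hne hδ
    rw [← hζ] at htlt
    have hζt : ζ ≤ t := hlb t htA
    have hdist : dist t ζ < δ := by
      rw [Real.dist_eq, abs_of_nonneg (by linarith)]
      linarith
    exact absurd htA.2 (not_lt.mpr (hball ⟨Metric.mem_ball.mpr hdist, htA.1⟩).le)
  -- L ζ ≤ S
  have hle : L ζ ≤ S := by
    rcases eq_or_lt_of_le hζ0 with heq | hlt
    · rw [← heq, hL0]; exact hS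
    · by_contra h
      push_neg at h
      have hIci : Ici (0:ℝ) ∈ nhds ζ := Ici_mem_nhds hlt
      have hev : ∀ᶠ t in nhdsWithin ζ (Ici 0), S < L t := hcw (Ioi_mem_nhds h)
      rw [nhdsWithin_eq_nhds.mpr hIci] at hev
      have hev' : ∀ᶠ t in nhdsWithin ζ (Iio ζ), S < L t ∧ 0 ≤ t :=
        Filter.Eventually.filter_mono nhdsWithin_le_nhds
          (hev.and (Filter.eventually_mem_set.mpr hIci))
      obtain ⟨t, ht, htlt⟩ := (hev'.and self_mem_nhdsWithin).exists
      exact absurd (hlb t ⟨ht.2, ht.1⟩) (not_le.mpr htlt)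
  have hLζ : L ζ = S := le_antisymm hle hge
  exact ⟨hLζ, by rw [key hne, hLζ]⟩
end

section
/- Let a > 0, b ≥ 0, and let f : [0,∞) → ℝ be bounded measurable. Define K_{a,b}f(t) = √(a/(2π)) ∫_0^t ((s+b)/(t−s)^{3/2}) exp(−a(s+b)²/(2(t−s))) f(s) ds for t > 0. Then the Laplace transform satisfies ∫_0^∞ e^{−λt} K_{a,b}f(t) dt = e^{−√(2aλ) b} · ∫_0^∞ e^{−(λ+√(2aλ))s} f(s) ds for every λ > 0. -/
open MeasureTheory Set Real

lemma glasser_integrable {α β : ℝ} (hα : 0 < α) (hβ : 0 < β) :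
    IntegrableOn (fun u : ℝ => Real.exp (-(α * u ^ 2) - β / u ^ 2)) (Ioi 0) := by
  refine Integrable.mono' ((integrable_exp_neg_mul_sq hα).integrableOn)
    ?_ ?_
  · exact ((measurable_exp.comp ((measurable_id.pow_const 2 |>.const_mul α).neg.sub
      ((measurable_id.pow_const 2).const_div β))).aestronglyMeasurable)
  · filter_upwards with u
    rw [Real.norm_eq_abs, abs_of_pos (Real.exp_pos _), Real.exp_le_exp]
    have : 0 ≤ β / u ^ 2 := by positivity
    linarith

lemma glasser (α β : ℝ) (hα : 0 < α) (hβ : 0 < β) :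
    ∫ u in Ioi (0:ℝ), Real.exp (-(α * u ^ 2) - β / u ^ 2)
      = Real.sqrt (π / α) / 2 * Real.exp (-2 * Real.sqrt (α * β)) := by
  set p := Real.sqrt α with hp
  set q := Real.sqrt β with hq
  have hp0 : 0 < p := Real.sqrt_pos.2 hα
  have hq0 : 0 < q := Real.sqrt_pos.2 hβ
  have hp2 : p ^ 2 = α := Real.sq_sqrt hα.le
  have hq2 : q ^ 2 = β := Real.sq_sqrt hβ.le
  set g : ℝ → ℝ := fun u => p * u - q / u with hg
  -- rewrite the integrand
  have key : ∀ u ∈ Ioi (0:ℝ), Real.exp (-(α * u ^ 2) - β / u ^ 2)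
      = Real.exp (-(2 * (p*q))) * Real.exp (-(g u) ^ 2) := by
    intro u hu
    rw [← Real.exp_add]
    congr 1
    have hu0 : (u:ℝ) ≠ 0 := (ne_of_gt hu)
    rw [← hp2, ← hq2]
    simp only [hg]
    field_simp [hg]
    ring
  set k := q / p with hk
  have hk0 : 0 < k := div_pos hq0 hp0
  set g0 : ℝ → ℝ := fun u => Real.exp (-(g u) ^ 2) with hg0
  -- integrability of g0 on Ioi 0
  have Ig : IntegrableOn g0 (Ioi 0) := by
    have := (glasser_integrable hα hβ).const_mul (Real.exp (2 * (p * q)))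
    refine IntegrableOn.congr_fun this (fun u hu => ?_) measurableSet_Ioi
    rw [key u hu, ← mul_assoc, ← Real.exp_add]
    norm_num
    rfl
  -- reflection substitution u ↦ k / u
  have himg : (fun u : ℝ => k / u) '' Ioi 0 = Ioi 0 := by
    ext x
    constructor
    · rintro ⟨u, hu, rfl⟩; exact div_pos hk0 hu
    · intro hx; exact ⟨k / x, div_pos hk0 hx, by field_simp⟩
  have hderiv : ∀ u ∈ Ioi (0:ℝ),
      HasDerivWithinAt (fun u : ℝ => k / u) (-(k / u ^ 2)) (Ioi 0) u := by
    intro u hu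
    have : HasDerivAt (fun u : ℝ => k / u) (-(k / u ^ 2)) u := by
      simpa [div_eq_mul_inv, mul_comm] using
        ((hasDerivAt_inv (ne_of_gt hu)).const_mul k)
    exact this.hasDerivWithinAt
  have hinj : InjOn (fun u : ℝ => k / u) (Ioi 0) := by
    intro x hx y hy hxy
    have hx0 : (0:ℝ) < x := hx
    have hy0 : (0:ℝ) < y := hy
    have h : k / x = k / y := hxy
    rw [div_eq_div_iff (ne_of_gt hx0) (ne_of_gt hy0)] at h
    exact (mul_left_cancel₀ (ne_of_gt hk0) h).symm
  have refl_eq : ∫ u in Ioi (0:ℝ), g0 u = ∫ u in Ioi (0:ℝ), (k / u ^ 2) * g0 u := by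
    have := integral_image_eq_integral_abs_deriv_smul measurableSet_Ioi hderiv hinj g0
    rw [himg] at this
    rw [this]
    refine setIntegral_congr_fun measurableSet_Ioi (fun u hu => ?_)
    have hu0 : (0:ℝ) < u := hu
    have habs : |(-(k / u ^ 2))| = k / u ^ 2 := by
      rw [abs_neg, abs_of_pos (by positivity)]
    have hgk : g (k / u) = -(g u) := by
      simp only [hg, hk]
      field_simp
      ring
    simp only [smul_eq_mul, habs, hg0, hgk, neg_sq]
  have Ig2 : IntegrableOn (fun u : ℝ => (k / u ^ 2) * g0 u) (Ioi 0) := by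
    have := (integrableOn_image_iff_integrableOn_abs_deriv_smul measurableSet_Ioi
      hderiv hinj g0)
    rw [himg] at this
    have h2 := this.mp Ig
    refine h2.congr_fun (fun u hu => ?_) measurableSet_Ioi
    have hu0 : (0:ℝ) < u := hu
    have habs : |(-(k / u ^ 2))| = k / u ^ 2 := by
      rw [abs_neg, abs_of_pos (by positivity)]
    have hgk : g (k / u) = -(g u) := by
      simp only [hg, hk]
      field_simp
      ring
    simp only [smul_eq_mul, habs, hg0, hgk, neg_sq]
  -- the substitution w = g u
  have himg2 : g '' Ioi 0 = univ := by
    refine eq_univ_of_forall (fun w => ?_)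
    have hr0 : (0:ℝ) ≤ w ^ 2 + 4 * (p * q) := by positivity
    set r := Real.sqrt (w ^ 2 + 4 * (p * q)) with hr
    have hr2 : r ^ 2 = w ^ 2 + 4 * (p * q) := Real.sq_sqrt hr0
    have hrabs : |w| ≤ r := by
      rw [hr, ← Real.sqrt_sq_eq_abs]
      exact Real.sqrt_le_sqrt (by nlinarith [mul_pos hp0 hq0])
    have hrw : 0 < w + r := by
      rcases abs_le.mp hrabs with ⟨h1, h2⟩
      have : r ^ 2 > w ^ 2 := by nlinarith [mul_pos hp0 hq0]
      nlinarith [abs_nonneg w, Real.sqrt_nonneg (w ^ 2 + 4 * (p * q))]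
    refine ⟨(w + r) / (2 * p), by rw [mem_Ioi]; positivity, ?_⟩
    simp only [hg]
    field_simp [ne_of_gt hrw]
    nlinarith [hr2]
  have hgderiv : ∀ u ∈ Ioi (0:ℝ),
      HasDerivWithinAt g (p + q / u ^ 2) (Ioi 0) u := by
    intro u hu
    have h1 : HasDerivAt (fun u : ℝ => p * u) p u := by
      simpa using (hasDerivAt_id u).const_mul p
    have h2 : HasDerivAt (fun u : ℝ => q / u) (-(q / u ^ 2)) u := by
      simpa [div_eq_mul_inv, mul_comm] using
        ((hasDerivAt_inv (ne_of_gt hu)).const_mul q)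
    have := h1.sub h2
    rw [show p + q / u ^ 2 = p - -(q / u ^ 2) by ring]
    exact this.hasDerivWithinAt
  have hginj : InjOn g (Ioi 0) := by
    have : StrictMonoOn g (Ioi 0) := by
      intro x hx y hy hxy
      have hx0 : (0:ℝ) < x := hx
      have hy0 : (0:ℝ) < y := hy
      simp only [hg]
      have : q / y ≤ q / x := by
        apply div_le_div_of_nonneg_left hq0.le hx0 hxy.le
      nlinarith
    exact this.injOn
  have sub_eq : ∫ u in Ioi (0:ℝ), (p + q / u ^ 2) * g0 u = Real.sqrt π := by
    have := integral_image_eq_integral_abs_deriv_smul measurableSet_Ioi hgderiv hginj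
      (fun w => Real.exp (-w ^ 2))
    rw [himg2] at this
    have hL : ∫ w in (univ : Set ℝ), Real.exp (-w ^ 2) = Real.sqrt π := by
      rw [Measure.restrict_univ]
      simpa using integral_gaussian 1
    rw [← hL, this]
    refine setIntegral_congr_fun measurableSet_Ioi (fun u hu => ?_)
    have hu0 : (0:ℝ) < u := hu
    have habs : |p + q / u ^ 2| = p + q / u ^ 2 := abs_of_pos (by positivity)
    simp only [smul_eq_mul, habs, hg0]
  -- put it together
  have hI2 : (∫ u in Ioi (0:ℝ), g0 u) + (∫ u in Ioi (0:ℝ), g0 u) = Real.sqrt π / p := by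
    nth_rewrite 2 [refl_eq]
    rw [← integral_add Ig Ig2, eq_div_iff (ne_of_gt hp0), ← sub_eq,
      ← integral_mul_const]
    refine setIntegral_congr_fun measurableSet_Ioi (fun u hu => ?_)
    have hu0 : (0:ℝ) < u := hu
    simp only [hk]
    field_simp
  have hIval : ∫ u in Ioi (0:ℝ), g0 u = Real.sqrt π / (2 * p) := by
    have h2 : (2:ℝ) * ∫ u in Ioi (0:ℝ), g0 u = Real.sqrt π / p := by rw [two_mul]; exact hI2
    field_simp at h2 ⊢
    linarith [h2]
  calc ∫ u in Ioi (0:ℝ), Real.exp (-(α * u ^ 2) - β / u ^ 2)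
      = ∫ u in Ioi (0:ℝ), Real.exp (-(2 * (p * q))) * g0 u := by
        refine setIntegral_congr_fun measurableSet_Ioi (fun u hu => key u hu)
    _ = Real.exp (-(2 * (p * q))) * (Real.sqrt π / (2 * p)) := by
        rw [integral_const_mul, hIval]
    _ = Real.sqrt (π / α) / 2 * Real.exp (-2 * Real.sqrt (α * β)) := by
        have h1 : Real.sqrt (α * β) = p * q := by rw [hp, hq, ← Real.sqrt_mul hα.le]
        have h2 : Real.sqrt (π / α) = Real.sqrt π / p := by
          rw [hp, Real.sqrt_div Real.pi_nonneg]
        rw [h1, h2, show (-2 : ℝ) * (p * q) = -(2 * (p * q)) by ring]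
        ring

lemma levy_aux (c lam : ℝ) (hc : 0 < c) (hlam : 0 < lam) :
    IntegrableOn (fun t : ℝ => Real.exp (-lam * t) * (c / t ^ ((3:ℝ)/2)) *
      Real.exp (-c ^ 2 / (2 * t))) (Ioi 0) ∧
    ∫ t in Ioi (0:ℝ), Real.exp (-lam * t) * (c / t ^ ((3:ℝ)/2)) *
      Real.exp (-c ^ 2 / (2 * t))
      = Real.sqrt (2 * π) * Real.exp (-Real.sqrt (2 * lam) * c) := by
  set F : ℝ → ℝ := fun t => Real.exp (-lam * t) * (c / t ^ ((3:ℝ)/2)) *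
      Real.exp (-c ^ 2 / (2 * t)) with hF
  set φ : ℝ → ℝ := fun u => c ^ 2 / u ^ 2 with hφ
  have hderiv : ∀ u ∈ Ioi (0:ℝ),
      HasDerivWithinAt φ (-(2 * c ^ 2 / u ^ 3)) (Ioi 0) u := by
    intro u hu
    have hu0 : (0:ℝ) < u := hu
    have h1 : HasDerivAt (fun u : ℝ => u ^ 2) (2 * u) u := by
      simpa using hasDerivAt_pow 2 u
    have h2 := (h1.inv (by positivity)).const_mul (c ^ 2)
    have : HasDerivAt φ (c ^ 2 * (-(2 * u) / (u ^ 2) ^ 2)) u := by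
      simpa [hφ, div_eq_mul_inv] using h2
    rw [show -(2 * c ^ 2 / u ^ 3) = c ^ 2 * (-(2 * u) / (u ^ 2) ^ 2) by
      field_simp <;> ring]
    exact this.hasDerivWithinAt
  have hinj : InjOn φ (Ioi 0) := by
    have : StrictAntiOn φ (Ioi 0) := by
      intro x hx y hy hxy
      have hx0 : (0:ℝ) < x := hx
      have hy0 : (0:ℝ) < y := hy
      simp only [hφ]
      apply div_lt_div_of_pos_left (by positivity) (by positivity)
      nlinarith
    exact this.injOn
  have himg : φ '' Ioi 0 = Ioi 0 := by
    ext t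
    constructor
    · rintro ⟨u, hu, rfl⟩
      have hu0 : (0:ℝ) < u := hu
      simp only [hφ, mem_Ioi]
      positivity
    · intro ht
      have ht0 : (0:ℝ) < t := ht
      refine ⟨c / Real.sqrt t, mem_Ioi.mpr (by positivity), ?_⟩
      have hst : Real.sqrt t ^ 2 = t := Real.sq_sqrt ht0.le
      simp only [hφ]
      rw [div_pow]
      rw [hst]
      field_simp
  have hcong : ∀ u ∈ Ioi (0:ℝ),
      |(-(2 * c ^ 2 / u ^ 3))| • F (φ u)
        = 2 * Real.exp (-(1 / 2 * u ^ 2) - lam * c ^ 2 / u ^ 2) := by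
    intro u hu
    have hu0 : (0:ℝ) < u := hu
    have habs : |(-(2 * c ^ 2 / u ^ 3))| = 2 * c ^ 2 / u ^ 3 := by
      rw [abs_neg, abs_of_pos (by positivity)]
    have hpow : (c ^ 2 / u ^ 2) ^ ((3:ℝ)/2) = c ^ 3 / u ^ 3 := by
      have h1 : c ^ 2 / u ^ 2 = (c / u) ^ (2:ℕ) := by rw [div_pow]
      rw [h1, ← Real.rpow_natCast (c / u) 2, ← Real.rpow_mul (by positivity)]
      norm_num
      rw [div_pow]
    have h2 : -c ^ 2 / (2 * (c ^ 2 / u ^ 2)) = -u ^ 2 / 2 := by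
      field_simp
    simp only [smul_eq_mul, habs, hF, hφ, hpow, h2]
    rw [show -(1 / 2 * u ^ 2) - lam * c ^ 2 / u ^ 2
      = -lam * (c ^ 2 / u ^ 2) + -u ^ 2 / 2 by ring, Real.exp_add]
    field_simp
  have hglass_int := (glasser_integrable (α := 1/2) (β := lam * c ^ 2)
    (by norm_num) (by positivity)).const_mul 2
  constructor
  · rw [← himg]
    rw [integrableOn_image_iff_integrableOn_abs_deriv_smul measurableSet_Ioi hderiv hinj F]
    exact IntegrableOn.congr_fun hglass_int
      (fun u hu => ((hcong u hu).symm)) measurableSet_Ioi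
  · have := integral_image_eq_integral_abs_deriv_smul measurableSet_Ioi hderiv hinj F
    rw [himg] at this
    rw [this, setIntegral_congr_fun measurableSet_Ioi hcong, integral_const_mul,
      glasser (1/2) (lam * c ^ 2) (by norm_num) (by positivity)]
    have h1 : Real.sqrt (π / (1/2)) = Real.sqrt (2 * π) := by
      rw [show (π / (1/2) : ℝ) = 2 * π by ring]
    have h2s : Real.sqrt (2 * lam) ^ 2 = 2 * lam := Real.sq_sqrt (by positivity)
    have h2 : Real.sqrt (1/2 * (lam * c ^ 2)) = Real.sqrt (2 * lam) * c / 2 := by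
      rw [show (1:ℝ)/2 * (lam * c ^ 2) = (Real.sqrt (2 * lam) * c / 2) ^ 2 from by
        nlinarith [h2s], Real.sqrt_sq (by positivity)]
    rw [h1, h2]
    rw [show (-2 : ℝ) * (Real.sqrt (2 * lam) * c / 2) = -Real.sqrt (2 * lam) * c by ring]
    ring

lemma inner_aux (a lam s d : ℝ) (ha : 0 < a) (hlam : 0 < lam) (hd : 0 < d) :
    IntegrableOn (fun t : ℝ => Real.exp (-lam * t) * (d / (t - s) ^ ((3:ℝ)/2)) *
      Real.exp (-a * d ^ 2 / (2 * (t - s)))) (Ioi s) ∧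
    ∫ t in Ioi s, Real.exp (-lam * t) * (d / (t - s) ^ ((3:ℝ)/2)) *
      Real.exp (-a * d ^ 2 / (2 * (t - s)))
      = Real.sqrt (2 * π) / Real.sqrt a * Real.exp (-lam * s) *
        Real.exp (-Real.sqrt (2 * a * lam) * d) := by
  set c : ℝ := Real.sqrt a * d with hc
  have hsa : 0 < Real.sqrt a := Real.sqrt_pos.2 ha
  have hc0 : 0 < c := by positivity
  have hc2 : c ^ 2 = a * d ^ 2 := by rw [hc, mul_pow, Real.sq_sqrt ha.le]
  set K : ℝ → ℝ := fun t => Real.exp (-lam * t) * (d / (t - s) ^ ((3:ℝ)/2)) *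
      Real.exp (-a * d ^ 2 / (2 * (t - s))) with hK
  set φ : ℝ → ℝ := fun r => r + s with hφ
  have hderiv : ∀ r ∈ Ioi (0:ℝ), HasDerivWithinAt φ 1 (Ioi 0) r := fun r _ =>
    ((hasDerivAt_id r).add_const s).hasDerivWithinAt
  have hinj : InjOn φ (Ioi 0) := fun x _ y _ h => by simpa [hφ] using h
  have himg : φ '' Ioi 0 = Ioi s := by
    ext x
    simp only [hφ, mem_image, mem_Ioi]
    constructor
    · rintro ⟨r, hr, rfl⟩; linarith
    · intro hx; exact ⟨x - s, by linarith, by ring⟩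
  have hcong : ∀ r ∈ Ioi (0:ℝ), |(1:ℝ)| • K (φ r)
      = (Real.exp (-lam * s) / Real.sqrt a) *
        (Real.exp (-lam * r) * (c / r ^ ((3:ℝ)/2)) * Real.exp (-c ^ 2 / (2 * r))) := by
    intro r hr
    have hr0 : (0:ℝ) < r := hr
    simp only [smul_eq_mul, abs_one, one_mul, hK, hφ, add_sub_cancel_right]
    rw [show -c ^ 2 / (2 * r) = -a * d ^ 2 / (2 * r) by rw [hc2]; ring,
      show -lam * (r + s) = -lam * r + -lam * s by ring, Real.exp_add, hc]
    field_simp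
  have hL := levy_aux c lam hc0 hlam
  have hInt : IntegrableOn K (Ioi s) := by
    rw [← himg, integrableOn_image_iff_integrableOn_abs_deriv_smul measurableSet_Ioi
      hderiv hinj K]
    exact IntegrableOn.congr_fun
      ((hL.1.const_mul (Real.exp (-lam * s) / Real.sqrt a)))
      (fun r hr => (hcong r hr).symm) measurableSet_Ioi
  refine ⟨hInt, ?_⟩
  have := integral_image_eq_integral_abs_deriv_smul measurableSet_Ioi hderiv hinj K
  rw [himg] at this
  rw [this, setIntegral_congr_fun measurableSet_Ioi hcong, integral_const_mul, hL.2]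
  have hkey : Real.sqrt (2 * lam) * c = Real.sqrt (2 * a * lam) * d := by
    rw [hc, ← mul_assoc, ← Real.sqrt_mul (by positivity) a,
      show (2 * lam * a : ℝ) = 2 * a * lam by ring]
  rw [show -Real.sqrt (2 * lam) * c = -(Real.sqrt (2 * lam) * c) by ring, hkey]
  field_simp

/-- Lemma a_LTHK_lem1: the Laplace transform of
`K_{a,b}f(t) = √(a/2π) ∫_0^t ((s+b)/(t−s)^{3/2}) exp(−a(s+b)²/(2(t−s))) f(s) ds`
equals `e^{−√(2aλ)b} ∫_0^∞ e^{−(λ+√(2aλ))s} f(s) ds`. -/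
theorem laplace_of_K (a b lam : ℝ) (ha : 0 < a) (hb : 0 ≤ b) (hlam : 0 < lam)
    (f : ℝ → ℝ) (hmeas : Measurable f) (hbd : ∃ C, ∀ s, |f s| ≤ C) :
    ∫ t in Ioi (0:ℝ), Real.exp (-lam * t) *
        (Real.sqrt (a / (2 * Real.pi)) * ∫ s in Ioo (0:ℝ) t,
          ((s + b) / (t - s) ^ ((3:ℝ)/2)) *
            Real.exp (-a * (s + b) ^ 2 / (2 * (t - s))) * f s)
    = Real.exp (-(Real.sqrt (2 * a * lam)) * b) *
        ∫ s in Ioi (0:ℝ), Real.exp (-(lam + Real.sqrt (2 * a * lam)) * s) * f s := by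
  obtain ⟨Cb, hCb⟩ := hbd
  have hCb0 : 0 ≤ Cb := le_trans (abs_nonneg _) (hCb 0)
  have hπ : (0:ℝ) < 2 * π := by positivity
  set m : ℝ := Real.sqrt (2 * a * lam) with hm
  have hm0 : 0 < m := Real.sqrt_pos.2 (by positivity)
  set C : ℝ := Real.sqrt (a / (2 * π)) with hCdef
  have hsa : 0 < Real.sqrt a := Real.sqrt_pos.2 ha
  have hs2π : 0 < Real.sqrt (2 * π) := Real.sqrt_pos.2 hπ
  have hC0 : 0 < C := Real.sqrt_pos.2 (by positivity)
  have hCval : C * (Real.sqrt (2 * π) / Real.sqrt a) = 1 := by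
    rw [hCdef, Real.sqrt_div ha.le]
    field_simp
  set E : ℝ → ℝ → ℝ := fun s t => Real.exp (-lam * t) * ((s + b) / (t - s) ^ ((3:ℝ)/2)) *
      Real.exp (-a * (s + b) ^ 2 / (2 * (t - s))) with hE
  set Ψ : ℝ → ℝ → ℝ := fun s t => if s < t then C * f s * E s t else 0 with hΨ
  -- basic facts
  have hsb : ∀ s : ℝ, s ∈ Ioi (0:ℝ) → 0 < s + b := fun s hs => by
    have : (0:ℝ) < s := hs; linarith
  have hIA := fun (s : ℝ) (hs : s ∈ Ioi (0:ℝ)) => inner_aux a lam s (s + b) ha hlam (hsb s hs)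
  have hres : ∀ s : ℝ, s ∈ Ioi (0:ℝ) →
      (volume.restrict (Ioi (0:ℝ))).restrict (Ioi s) = volume.restrict (Ioi s) := by
    intro s hs
    rw [Measure.restrict_restrict measurableSet_Ioi,
      inter_eq_left.mpr (Ioi_subset_Ioi (le_of_lt hs))]
  have hfun : ∀ s : ℝ, (fun t => Ψ s t) = (Ioi s).indicator (fun t => C * f s * E s t) := by
    intro s; funext t
    by_cases h : s < t <;> simp [hΨ, indicator, h, mem_Ioi]
  have hE_nonneg : ∀ s t : ℝ, 0 < s → s < t → 0 ≤ E s t := by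
    intro s t hs h
    have h1 : (0:ℝ) < t - s := by linarith
    have h2 : (0:ℝ) ≤ (t - s) ^ ((3:ℝ)/2) := Real.rpow_nonneg h1.le _
    have h3 : (0:ℝ) ≤ s + b := by linarith
    simp only [hE]
    positivity
  -- measurability
  have hmeasΨ : Measurable (Function.uncurry Ψ) := by
    have h1 : Function.uncurry Ψ
        = fun p : ℝ × ℝ => if p.1 < p.2 then C * f p.1 * E p.1 p.2 else 0 := rfl
    rw [h1]
    have hE' : Measurable (fun p : ℝ × ℝ => C * f p.1 * E p.1 p.2) := by
      apply Measurable.mul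
      · exact (measurable_const.mul (hmeas.comp measurable_fst))
      · simp only [hE]
        apply Measurable.mul
        apply Measurable.mul
        · exact Real.measurable_exp.comp (measurable_snd.const_mul (-lam))
        · exact (measurable_fst.add_const b).div
            ((Real.continuous_rpow_const (by norm_num : (0:ℝ) ≤ 3/2)).measurable.comp
              (measurable_snd.sub measurable_fst))
        · exact Real.measurable_exp.comp
            (((((measurable_fst.add_const b).pow_const 2).const_mul (-a))).div
              ((measurable_snd.sub measurable_fst).const_mul 2))
    exact Measurable.ite (measurableSet_lt measurable_fst measurable_snd) hE' measurable_const
  -- integrability in t for fixed s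
  have cond1 : ∀ s ∈ Ioi (0:ℝ), Integrable (fun t => Ψ s t) (volume.restrict (Ioi (0:ℝ))) := by
    intro s hs
    rw [hfun s, integrable_indicator_iff measurableSet_Ioi]
    unfold IntegrableOn
    rw [hres s hs]
    exact (hIA s hs).1.const_mul (C * f s)
  -- value of the t-integral
  have hval : ∀ s ∈ Ioi (0:ℝ), ∫ t in Ioi (0:ℝ), Ψ s t
      = C * f s * (Real.sqrt (2 * π) / Real.sqrt a * Real.exp (-lam * s) *
          Real.exp (-m * (s + b))) := by
    intro s hs
    rw [hfun s, integral_indicator measurableSet_Ioi]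
    have : ∫ t in Ioi s, C * f s * E s t ∂(volume.restrict (Ioi (0:ℝ)))
        = ∫ t in Ioi s, C * f s * E s t := by rw [hres s hs]
    rw [this, integral_const_mul, (hIA s hs).2]
  -- value of the t-integral of the norm
  have hnorm : ∀ s ∈ Ioi (0:ℝ), ∫ t in Ioi (0:ℝ), ‖Ψ s t‖
      = C * |f s| * (Real.sqrt (2 * π) / Real.sqrt a * Real.exp (-lam * s) *
          Real.exp (-m * (s + b))) := by
    intro s hs
    have hfn : (fun t => ‖Ψ s t‖) = (Ioi s).indicator (fun t => C * |f s| * E s t) := by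
      funext t
      by_cases h : s < t
      · simp only [hΨ, indicator, mem_Ioi, if_pos h, Real.norm_eq_abs]
        rw [abs_mul, abs_mul, abs_of_pos hC0, abs_of_nonneg (hE_nonneg s t hs h)]
      · simp [hΨ, indicator, h, mem_Ioi]
    rw [hfn, integral_indicator measurableSet_Ioi]
    have : ∫ t in Ioi s, C * |f s| * E s t ∂(volume.restrict (Ioi (0:ℝ)))
        = ∫ t in Ioi s, C * |f s| * E s t := by rw [hres s hs]
    rw [this, integral_const_mul, (hIA s hs).2]
  -- domination for the s-integral
  have cond2 : Integrable (fun s => ∫ t, ‖Ψ s t‖ ∂(volume.restrict (Ioi (0:ℝ))))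
      (volume.restrict (Ioi (0:ℝ))) := by
    have hg : IntegrableOn (fun s : ℝ =>
        (C * Cb * (Real.sqrt (2 * π) / Real.sqrt a) * Real.exp (-m * b)) *
          Real.exp (-(lam + m) * s)) (Ioi 0) :=
      (exp_neg_integrableOn_Ioi 0 (by positivity)).const_mul _
    refine Integrable.mono' hg ?_ ?_
    · exact (hmeasΨ.norm.aestronglyMeasurable).integral_prod_right'
    · filter_upwards [ae_restrict_mem measurableSet_Ioi] with s hs
      rw [Real.norm_eq_abs, abs_of_nonneg (integral_nonneg (fun t => norm_nonneg _)),
        hnorm s hs]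
      have he1 : Real.exp (-m * (s + b)) = Real.exp (-m * s) * Real.exp (-m * b) := by
        rw [← Real.exp_add]; ring_nf
      have he2 : Real.exp (-(lam + m) * s) = Real.exp (-lam * s) * Real.exp (-m * s) := by
        rw [← Real.exp_add]; ring_nf
      rw [he1, he2]
      have hfs := hCb s
      calc C * |f s| * (Real.sqrt (2 * π) / Real.sqrt a * Real.exp (-lam * s) *
              (Real.exp (-m * s) * Real.exp (-m * b)))
          = (C * (Real.sqrt (2 * π) / Real.sqrt a * Real.exp (-lam * s) *
              (Real.exp (-m * s) * Real.exp (-m * b)))) * |f s| := by ring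
        _ ≤ (C * (Real.sqrt (2 * π) / Real.sqrt a * Real.exp (-lam * s) *
              (Real.exp (-m * s) * Real.exp (-m * b)))) * Cb :=
            mul_le_mul_of_nonneg_left hfs (by positivity)
        _ = C * Cb * (Real.sqrt (2 * π) / Real.sqrt a) * Real.exp (-m * b) *
              (Real.exp (-lam * s) * Real.exp (-m * s)) := by ring
  -- full integrability on the product
  have hInt : Integrable (Function.uncurry Ψ)
      ((volume.restrict (Ioi (0:ℝ))).prod (volume.restrict (Ioi (0:ℝ)))) := by
    rw [integrable_prod_iff hmeasΨ.aestronglyMeasurable]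
    constructor
    · filter_upwards [ae_restrict_mem measurableSet_Ioi] with s hs
      exact cond1 s hs
    · exact cond2
  -- step 1 : rewrite the LHS
  have step1 : ∀ t ∈ Ioi (0:ℝ), Real.exp (-lam * t) *
        (C * ∫ s in Ioo (0:ℝ) t, ((s + b) / (t - s) ^ ((3:ℝ)/2)) *
          Real.exp (-a * (s + b) ^ 2 / (2 * (t - s))) * f s)
      = ∫ s in Ioi (0:ℝ), Ψ s t := by
    intro t ht
    have h1 : ∀ s : ℝ, Ψ s t = (Iio t).indicator (fun s => C * f s * E s t) s := by
      intro s; by_cases h : s < t <;> simp [hΨ, indicator, h, mem_Iio]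
    simp only [h1]
    rw [setIntegral_indicator measurableSet_Iio, Ioi_inter_Iio]
    rw [show (∫ s in Ioo (0:ℝ) t, C * f s * E s t)
        = ∫ s in Ioo (0:ℝ) t, Real.exp (-lam * t) * (C * (((s + b) / (t - s) ^ ((3:ℝ)/2)) *
            Real.exp (-a * (s + b) ^ 2 / (2 * (t - s))) * f s)) from
      setIntegral_congr_fun measurableSet_Ioo (fun s _ => by simp only [hE]; ring),
      integral_const_mul, integral_const_mul]
  -- assemble
  calc ∫ t in Ioi (0:ℝ), Real.exp (-lam * t) *
        (C * ∫ s in Ioo (0:ℝ) t, ((s + b) / (t - s) ^ ((3:ℝ)/2)) *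
          Real.exp (-a * (s + b) ^ 2 / (2 * (t - s))) * f s)
      = ∫ t in Ioi (0:ℝ), ∫ s in Ioi (0:ℝ), Ψ s t :=
        setIntegral_congr_fun measurableSet_Ioi step1
    _ = ∫ s in Ioi (0:ℝ), ∫ t in Ioi (0:ℝ), Ψ s t := (integral_integral_swap hInt).symm
    _ = ∫ s in Ioi (0:ℝ), Real.exp (-m * b) * (Real.exp (-(lam + m) * s) * f s) := by
        refine setIntegral_congr_fun measurableSet_Ioi (fun s hs => ?_)
        rw [hval s hs]
        have he1 : Real.exp (-m * (s + b)) = Real.exp (-m * s) * Real.exp (-m * b) := by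
          rw [← Real.exp_add]; ring_nf
        have he2 : Real.exp (-(lam + m) * s) = Real.exp (-lam * s) * Real.exp (-m * s) := by
          rw [← Real.exp_add]; ring_nf
        rw [he1, he2]
        linear_combination (f s * Real.exp (-lam * s) * Real.exp (-m * s) *
          Real.exp (-m * b)) * hCval
    _ = Real.exp (-m * b) * ∫ s in Ioi (0:ℝ), Real.exp (-(lam + m) * s) * f s :=
        integral_const_mul _ _
end

section
/- For γ > 0, t > 0 and x ≥ 0, the function g_{0,γ}(t,x) = (1/γ) exp(2x/γ + 2t/γ²) erfc(x/√(2t) + √(2t)/γ) converges pointwise, as γ ↓ 0, to the Gaussian kernel g(t,x) = (1/√(2πt)) e^{−x²/(2t)}. -/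
open MeasureTheory Set Filter

/-- The complementary error function. -/
noncomputable def erfc (z : ℝ) : ℝ := (2 / Real.sqrt Real.pi) * ∫ u in Ioi z, Real.exp (-u ^ 2)

lemma exp_neg_sq_tendsto : Tendsto (fun u : ℝ => Real.exp (-u ^ 2)) atTop (nhds 0) := by
  apply Real.tendsto_exp_atBot.comp
  apply tendsto_neg_atBot_iff.mpr
  exact tendsto_pow_atTop (by norm_num)

lemma integrableOn_exp_neg_sq (z : ℝ) :
    IntegrableOn (fun u : ℝ => Real.exp (-u ^ 2)) (Ioi z) := by
  have := (integrable_exp_neg_mul_sq (b := 1) one_pos).integrableOn (s := Ioi z)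
  simpa using this

lemma integrableOn_mul_exp_neg_sq (z : ℝ) :
    IntegrableOn (fun u : ℝ => u * Real.exp (-u ^ 2)) (Ioi z) := by
  have := (integrable_mul_exp_neg_mul_sq (b := 1) one_pos).integrableOn (s := Ioi z)
  simpa using this

lemma integral_mul_exp_neg_sq (z : ℝ) :
    ∫ u in Ioi z, u * Real.exp (-u ^ 2) = Real.exp (-z ^ 2) / 2 := by
  have h := integral_Ioi_of_hasDerivAt_of_tendsto
    (f := fun u : ℝ => -Real.exp (-u ^ 2) / 2) (f' := fun u : ℝ => u * Real.exp (-u ^ 2))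
    (a := z) (m := 0) ?_ ?_ ?_ ?_
  · rw [h]; ring
  · exact (Continuous.continuousWithinAt (by continuity))
  · intro u _
    have h1 : HasDerivAt (fun u : ℝ => -u ^ 2) (-(2 * u)) u := by
      simpa using ((hasDerivAt_pow 2 u).fun_neg)
    have h2 := (h1.exp).fun_neg.div_const 2
    exact h2.congr_deriv (by ring)
  · exact integrableOn_mul_exp_neg_sq z
  · have := exp_neg_sq_tendsto.neg.div_const 2
    simpa using this

lemma tail_upper {z : ℝ} (hz : 1 ≤ z) :
    z * Real.exp (z ^ 2) * ∫ u in Ioi z, Real.exp (-u ^ 2) ≤ 1 / 2 := by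
  have hz0 : 0 < z := lt_of_lt_of_le one_pos hz
  have hint : ∫ u in Ioi z, Real.exp (-u ^ 2) ≤ ∫ u in Ioi z, (u / z) * Real.exp (-u ^ 2) := by
    apply setIntegral_mono_on (integrableOn_exp_neg_sq z)
    · exact ((integrableOn_mul_exp_neg_sq z).div_const z).congr
        (Eventually.of_forall fun u => by ring)
    · exact measurableSet_Ioi
    · intro u hu
      have h1 : 1 ≤ u / z := (one_le_div hz0).mpr (le_of_lt hu)
      nlinarith [Real.exp_pos (-u ^ 2)]
  have h2 : ∫ u in Ioi z, (u / z) * Real.exp (-u ^ 2) = Real.exp (-z ^ 2) / (2 * z) := by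
    have e : ∫ u in Ioi z, (u / z) * Real.exp (-u ^ 2)
        = (∫ u in Ioi z, u * Real.exp (-u ^ 2)) / z := by
      rw [← integral_div]; congr 1; ext u; ring
    rw [e, integral_mul_exp_neg_sq]; ring
  have h3 : z * Real.exp (z ^ 2) * ∫ u in Ioi z, Real.exp (-u ^ 2)
      ≤ z * Real.exp (z ^ 2) * (Real.exp (-z ^ 2) / (2 * z)) := by
    apply mul_le_mul_of_nonneg_left (le_trans hint (le_of_eq h2))
    positivity
  have he : Real.exp (z ^ 2) * Real.exp (-z ^ 2) = 1 := by
    rw [← Real.exp_add]; simp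
  have hfin : z * Real.exp (z ^ 2) * (Real.exp (-z ^ 2) / (2 * z)) = 1 / 2 := by
    field_simp
    nlinarith [he]
  linarith [h3, le_of_eq hfin]

lemma integrableOn_aux (z : ℝ) (hz : 0 < z) :
    IntegrableOn (fun u : ℝ => Real.exp (-u ^ 2) + Real.exp (-u ^ 2) / (2 * u ^ 2)) (Ioi z) := by
  have hb : IntegrableOn (fun u : ℝ => Real.exp (-u ^ 2) + Real.exp (-u ^ 2) / (2 * z ^ 2))
      (Ioi z) := (integrableOn_exp_neg_sq z).add ((integrableOn_exp_neg_sq z).div_const _)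
  apply Integrable.mono' hb
  · apply Measurable.aestronglyMeasurable; measurability
  · filter_upwards [ae_restrict_mem measurableSet_Ioi] with u hu
    have huz : z < u := mem_Ioi.mp hu
    have hu0 : 0 < u := lt_trans hz huz
    have hpos : 0 ≤ Real.exp (-u ^ 2) + Real.exp (-u ^ 2) / (2 * u ^ 2) := by positivity
    rw [Real.norm_eq_abs, abs_of_nonneg hpos]
    have hmono : Real.exp (-u ^ 2) / (2 * u ^ 2) ≤ Real.exp (-u ^ 2) / (2 * z ^ 2) := by
      apply div_le_div_of_nonneg_left (le_of_lt (Real.exp_pos _)) (by positivity)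
      nlinarith
    linarith

lemma integral_aux (z : ℝ) (hz : 0 < z) :
    ∫ u in Ioi z, (Real.exp (-u ^ 2) + Real.exp (-u ^ 2) / (2 * u ^ 2))
      = Real.exp (-z ^ 2) / (2 * z) := by
  have h := integral_Ioi_of_hasDerivAt_of_tendsto
    (f := fun u : ℝ => -Real.exp (-u ^ 2) / (2 * u))
    (f' := fun u : ℝ => Real.exp (-u ^ 2) + Real.exp (-u ^ 2) / (2 * u ^ 2))
    (a := z) (m := 0) ?_ ?_ ?_ ?_
  · rw [h]; ring
  · apply ContinuousWithinAt.div
    · exact (Continuous.continuousWithinAt (by continuity))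
    · exact (Continuous.continuousWithinAt (by continuity))
    · positivity
  · intro u hu
    have hu0 : u ≠ 0 := ne_of_gt (lt_trans hz (mem_Ioi.mp hu))
    have h1 : HasDerivAt (fun u : ℝ => -u ^ 2) (-(2 * u)) u := by
      simpa using ((hasDerivAt_pow 2 u).fun_neg)
    have h2 : HasDerivAt (fun u : ℝ => 2 * u) 2 u := by
      simpa using (hasDerivAt_id u).const_mul 2
    have h3 := (h1.exp.fun_neg.fun_div h2 (by simpa using hu0))
    refine h3.congr_deriv ?_
    field_simp
    ring
  · exact integrableOn_aux z hz
  · have h1 : Tendsto (fun u : ℝ => 2 * u) atTop atTop :=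
      (tendsto_id.const_mul_atTop two_pos)
    have := (exp_neg_sq_tendsto.neg).div_atTop h1
    simpa using this

lemma tail_lower {z : ℝ} (hz : 1 ≤ z) :
    1 / (2 * (1 + 1 / (2 * z ^ 2))) ≤ z * Real.exp (z ^ 2) * ∫ u in Ioi z, Real.exp (-u ^ 2) := by
  have hz0 : 0 < z := lt_of_lt_of_le one_pos hz
  have hub : ∫ u in Ioi z, (Real.exp (-u ^ 2) + Real.exp (-u ^ 2) / (2 * u ^ 2))
      ≤ (1 + 1 / (2 * z ^ 2)) * ∫ u in Ioi z, Real.exp (-u ^ 2) := by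
    rw [← integral_const_mul]
    apply setIntegral_mono_on
    · exact integrableOn_aux z hz0
    · exact (integrableOn_exp_neg_sq z).const_mul _
    · exact measurableSet_Ioi
    · intro u hu
      have huz : z < u := mem_Ioi.mp hu
      have hu0 : 0 < u := lt_trans hz0 huz
      have hmono : Real.exp (-u ^ 2) / (2 * u ^ 2) ≤ Real.exp (-u ^ 2) / (2 * z ^ 2) := by
        apply div_le_div_of_nonneg_left (le_of_lt (Real.exp_pos _)) (by positivity)
        nlinarith
      have h2 : (1 + 1 / (2 * z ^ 2)) * Real.exp (-u ^ 2)
          = Real.exp (-u ^ 2) + Real.exp (-u ^ 2) / (2 * z ^ 2) := by ring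
      rw [h2]; linarith
  rw [integral_aux z hz0] at hub
  have hc : 0 < 1 + 1 / (2 * z ^ 2) := by positivity
  have hI : Real.exp (-z ^ 2) / (2 * z) / (1 + 1 / (2 * z ^ 2))
      ≤ ∫ u in Ioi z, Real.exp (-u ^ 2) := by
    rw [div_le_iff₀ hc]
    linarith [hub]
  have hmul := mul_le_mul_of_nonneg_left hI
    (by positivity : (0 : ℝ) ≤ z * Real.exp (z ^ 2))
  refine le_trans (le_of_eq ?_) hmul
  have he : Real.exp (z ^ 2) * Real.exp (-z ^ 2) = 1 := by
    rw [← Real.exp_add]; simp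
  have hcne : (1 + 1 / (2 * z ^ 2)) ≠ 0 := ne_of_gt hc
  have halg : z * Real.exp (z ^ 2) * (Real.exp (-z ^ 2) / (2 * z) / (1 + 1 / (2 * z ^ 2)))
      = (Real.exp (z ^ 2) * Real.exp (-z ^ 2)) * (1 / (2 * (1 + 1 / (2 * z ^ 2)))) := by
    field_simp
  rw [halg, he, one_mul]

lemma alg_aux (γ z P Q R W c a : ℝ) (hγ : 0 < γ) (hz : 0 < z) (hexp : R * Q = 1)
    (hden : γ * a + c = γ * z) :
    R * (z * (P * Q) * W / (γ * a + c)) = (1 / γ) * P * W := by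
  rw [hden]
  field_simp
  linear_combination (P * W) * hexp

lemma key_tendsto : Tendsto (fun z : ℝ => z * Real.exp (z ^ 2) * ∫ u in Ioi z, Real.exp (-u ^ 2))
    atTop (nhds (1 / 2)) := by
  have h1 : Tendsto (fun z : ℝ => 1 / (2 * z ^ 2)) atTop (nhds 0) := by
    apply Tendsto.div_atTop tendsto_const_nhds
    exact (tendsto_pow_atTop (by norm_num)).const_mul_atTop two_pos
  have h2 : Tendsto (fun z : ℝ => 2 * (1 + 1 / (2 * z ^ 2))) atTop (nhds 2) := by
    have h3 := ((tendsto_const_nhds (x := (1:ℝ)) (f := atTop)).add h1).const_mul (2:ℝ)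
    convert h3 using 2
    norm_num
  have hlo : Tendsto (fun z : ℝ => 1 / (2 * (1 + 1 / (2 * z ^ 2)))) atTop (nhds (1 / 2)) :=
    tendsto_const_nhds.div h2 (by norm_num)
  apply tendsto_of_tendsto_of_tendsto_of_le_of_le' hlo tendsto_const_nhds
  · filter_upwards [eventually_ge_atTop 1] with z hz using tail_lower hz
  · filter_upwards [eventually_ge_atTop 1] with z hz using tail_upper hz

lemma erfc_tendsto : Tendsto (fun z : ℝ => z * Real.exp (z ^ 2) * erfc z) atTop
    (nhds (1 / Real.sqrt Real.pi)) := by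
  have h := key_tendsto.const_mul (2 / Real.sqrt Real.pi)
  have he : (2 / Real.sqrt Real.pi) * (1 / 2) = 1 / Real.sqrt Real.pi := by
    ring
  rw [he] at h
  apply h.congr
  intro z
  unfold erfc
  ring

/-- As `γ ↓ 0`, the sticky boundary kernel `g_{0,γ}(t,x)` converges pointwise to the
Gaussian kernel `g(t,x)`. -/
theorem g_zero_gamma_tendsto_gauss (t x : ℝ) (ht : 0 < t) (hx : 0 ≤ x) :
    Tendsto (fun γ : ℝ =>
        (1 / γ) * Real.exp (2 * x / γ + 2 * t / γ ^ 2) *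
          erfc (x / Real.sqrt (2 * t) + Real.sqrt (2 * t) / γ))
      (nhdsWithin 0 (Ioi 0))
      (nhds ((1 / Real.sqrt (2 * Real.pi * t)) * Real.exp (-x ^ 2 / (2 * t)))) := by
  have hc0 : 0 < Real.sqrt (2 * t) := Real.sqrt_pos.mpr (by linarith)
  set c := Real.sqrt (2 * t) with hc
  set a := x / c with ha
  have ha0 : 0 ≤ a := div_nonneg hx hc0.le
  have hcsq : c ^ 2 = 2 * t := Real.sq_sqrt (by linarith)
  have hac : a * c = x := div_mul_cancel₀ x hc0.ne'
  have hz : Tendsto (fun γ : ℝ => a + c / γ) (nhdsWithin 0 (Ioi 0)) atTop := by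
    apply tendsto_atTop_add_const_left
    have h := tendsto_inv_nhdsGT_zero.const_mul_atTop hc0
    apply h.congr
    intro γ
    rw [div_eq_mul_inv]
  have h1 := erfc_tendsto.comp hz
  have h2 : Tendsto (fun γ : ℝ => γ * a + c) (nhdsWithin 0 (Ioi 0)) (nhds c) := by
    have hcont : Continuous fun γ : ℝ => γ * a + c := by continuity
    have := (hcont.tendsto 0).mono_left (nhdsWithin_le_nhds (s := Ioi (0:ℝ)))
    simpa using this
  have h3 := (h1.div h2 hc0.ne').const_mul (Real.exp (-a ^ 2))
  have hval : Real.exp (-a ^ 2) * (1 / Real.sqrt Real.pi / c)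
      = (1 / Real.sqrt (2 * Real.pi * t)) * Real.exp (-x ^ 2 / (2 * t)) := by
    have h2pt : Real.sqrt (2 * Real.pi * t) = Real.sqrt Real.pi * c := by
      rw [hc, ← Real.sqrt_mul Real.pi_pos.le]
      congr 1
      ring
    have haa : -a ^ 2 = -x ^ 2 / (2 * t) := by
      rw [ha]
      rw [div_pow]
      rw [hcsq]
      ring
    rw [h2pt, haa]
    rw [div_div]
    ring
  rw [← hval]
  apply h3.congr'
  filter_upwards [self_mem_nhdsWithin] with γ (hγ : 0 < γ)
  have hzpos : 0 < a + c / γ := by positivity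
  have hE : (a + c / γ) ^ 2 = 2 * x / γ + 2 * t / γ ^ 2 + a ^ 2 := by
    have hexpand : (a + c / γ) ^ 2 = a ^ 2 + 2 * (a * c) / γ + c ^ 2 / γ ^ 2 := by
      field_simp
      ring
    rw [hexpand, hac, hcsq]
    ring
  have hexp : Real.exp (-a ^ 2) * Real.exp (a ^ 2) = 1 := by
    rw [← Real.exp_add]; simp
  show Real.exp (-a ^ 2) *
      ((a + c / γ) * Real.exp ((a + c / γ) ^ 2) * erfc (a + c / γ) / (γ * a + c))
    = (1 / γ) * Real.exp (2 * x / γ + 2 * t / γ ^ 2) * erfc (a + c / γ)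
  have hez : Real.exp ((a + c / γ) ^ 2)
      = Real.exp (2 * x / γ + 2 * t / γ ^ 2) * Real.exp (a ^ 2) := by
    rw [hE, Real.exp_add]
  have hden : γ * a + c = γ * (a + c / γ) := by
    field_simp
  rw [hez]
  exact alg_aux γ (a + c / γ) (Real.exp (2 * x / γ + 2 * t / γ ^ 2)) (Real.exp (a ^ 2))
    (Real.exp (-a ^ 2)) (erfc (a + c / γ)) c a hγ hzpos hexp hden
end
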